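/- Let G be a group and let 𝒴 be a nonempty family of subsets of G such that every Y ∈ 𝒴 is symmetric (Y = Y⁻¹) and contains 1, 𝒴 is closed under finite unions, and any two members of 𝒴 are N-commensurable. Then there do not exist Y₀, Y₁, …, Y_N ∈ 𝒴 with ⟨Y₀⟩ ⊊ ⟨Y₁⟩ ⊊ ⋯ ⊊ ⟨Y_N⟩, where ⟨Y⟩ denotes the subgroup of G generated by Y. -/

import Mathlib

open Pointwise

/-- `A` is a `K`-approximate subgroup of `G`. -/
def IsApproxSubgroup {G : Type*} [Group G] (K : ℕ) (A : Set G) : Prop :=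
  (1 : G) ∈ A ∧ A = A⁻¹ ∧ ∃ F : Finset G, F.card ≤ K ∧ A * A ⊆ (F : Set G) * A

/-- `X` and `Y` are `N`-commensurable subsets of `G`. -/
def NComm {G : Type*} [Group G] (N : ℕ) (X Y : Set G) : Prop :=
  ∃ Z₀ Z₁ : Finset G, Z₀.card ≤ N ∧ Z₁.card ≤ N ∧
    X ⊆ (Z₀ : Set G) * Y ∧ Y ⊆ (Z₁ : Set G) * X

/-- Lemma 2.11: no chain `⟨Y₀⟩ ⊊ ⟨Y₁⟩ ⊊ ⋯ ⊊ ⟨Y_N⟩` of length `N+1` of generated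
subgroups exists in a uniformly `N`-commensurable family `𝒴` of symmetric sets
containing `1` which is closed under finite unions. -/
theorem no_long_chain_of_generated_subgroups
    {G : Type*} [Group G] (N : ℕ) (𝒴 : Set (Set G)) (hne : 𝒴.Nonempty)
    (hsymm : ∀ Y ∈ 𝒴, Y = Y⁻¹) (hone : ∀ Y ∈ 𝒴, (1 : G) ∈ Y)
    (hunion : ∀ Y ∈ 𝒴, ∀ Y' ∈ 𝒴, Y ∪ Y' ∈ 𝒴)
    (hcomm : ∀ Y ∈ 𝒴, ∀ Y' ∈ 𝒴, NComm N Y Y') :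
    ¬ ∃ Yf : Fin (N + 1) → Set G, (∀ i, Yf i ∈ 𝒴) ∧
      (∀ i j : Fin (N + 1), i < j →
        Subgroup.closure (Yf i) < Subgroup.closure (Yf j)) := by
  rintro ⟨Yf, hmem, hchain⟩
  -- A common superset `U ∈ 𝒴` of all the `Yf i`.
  have hUex : ∃ U ∈ 𝒴, ∀ i, Yf i ⊆ U := by
    have key : ∀ s : Finset (Fin (N + 1)), ∃ U ∈ 𝒴, ∀ i ∈ s, Yf i ⊆ U := by
      intro s
      induction s using Finset.induction_on with
      | empty =>
        obtain ⟨U, hU⟩ := hne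
        exact ⟨U, hU, by simp⟩
      | @insert a s ha ih =>
        obtain ⟨U, hU𝒴, hUsub⟩ := ih
        refine ⟨Yf a ∪ U, hunion _ (hmem a) _ hU𝒴, ?_⟩
        intro i hi
        rcases Finset.mem_insert.mp hi with h | h
        · subst h; exact Set.subset_union_left
        · exact (hUsub i h).trans Set.subset_union_right
    obtain ⟨U, hU𝒴, hUsub⟩ := key Finset.univ
    exact ⟨U, hU𝒴, fun i => hUsub i (Finset.mem_univ i)⟩
  obtain ⟨U, hU𝒴, hUsub⟩ := hUex
  obtain ⟨Z₀, Z₁, hZ₀, -, hUZ, -⟩ := hcomm U hU𝒴 (Yf 0) (hmem 0)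
  -- choose witnesses escaping lower closures
  have hy : ∀ i : Fin (N + 1), ∃ a, a ∈ Yf i ∧
      ∀ j < i, a ∉ Subgroup.closure (Yf j) := by
    intro i
    rcases eq_or_ne i 0 with rfl | hi0
    · refine ⟨1, hone _ (hmem 0), fun j hj => ?_⟩
      exact absurd hj (Fin.not_lt_zero j)
    · have hpos : 0 < i.val := Nat.pos_of_ne_zero (fun h => hi0 (Fin.ext h))
      have hlt' : i.val - 1 < N + 1 := by omega
      set i' : Fin (N + 1) := ⟨i.val - 1, hlt'⟩ with hi'
      have hi'i : i' < i := by
        rw [Fin.lt_def]; show i.val - 1 < i.val; omega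
      have hex : ∃ a ∈ Yf i, a ∉ Subgroup.closure (Yf i') := by
        by_contra h
        push_neg at h
        have hle : Subgroup.closure (Yf i) ≤ Subgroup.closure (Yf i') :=
          (Subgroup.closure_le _).mpr h
        exact absurd (hchain i' i hi'i) (fun h => lt_irrefl _ (h.trans_le hle))
      obtain ⟨a, haY, haN⟩ := hex
      refine ⟨a, haY, fun j hj hja => haN ?_⟩
      have hji' : j ≤ i' := by
        rw [Fin.le_def]
        have : j.val < i.val := hj
        simp [hi']; omega
      rcases eq_or_lt_of_le hji' with h | h
      · exact h ▸ hja
      · exact (hchain j i' h).le hja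
  choose y hyY hyN using hy
  -- each `y i` lies in `Z₀ * Yf 0`
  have hzw : ∀ i, ∃ zi ∈ Z₀, ∃ wi ∈ Yf 0, zi * wi = y i := by
    intro i
    have : y i ∈ (Z₀ : Set G) * Yf 0 := hUZ (hUsub i (hyY i))
    simpa [Set.mem_mul] using this
  choose z hz w hw hzw using hzw
  -- pigeonhole
  have hcard : Z₀.card < (Finset.univ : Finset (Fin (N + 1))).card := by
    rw [Finset.card_univ, Fintype.card_fin]; omega
  obtain ⟨i, -, j, -, hij, hzeq⟩ :=
    Finset.exists_ne_map_eq_of_card_lt_of_maps_to hcard (fun i _ => hz i)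
  have key : ∀ i j : Fin (N + 1), i < j → z i = z j → False := by
    intro i j hlt hz'
    have h0i : Subgroup.closure (Yf 0) ≤ Subgroup.closure (Yf i) := by
      rcases eq_or_lt_of_le (Fin.zero_le i) with h | h
      · exact le_of_eq (by rw [h])
      · exact (hchain 0 i h).le
    have hwi : w i ∈ Subgroup.closure (Yf i) := h0i (Subgroup.subset_closure (hw i))
    have hwj : w j ∈ Subgroup.closure (Yf i) := h0i (Subgroup.subset_closure (hw j))
    have hyi : y i ∈ Subgroup.closure (Yf i) := Subgroup.subset_closure (hyY i)
    have hmemj : y j ∈ Subgroup.closure (Yf i) := by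
      have heq : y j = y i * ((w i)⁻¹ * w j) := by
        rw [← hzw i, ← hzw j, hz']; group
      rw [heq]
      exact mul_mem hyi (mul_mem (inv_mem hwi) hwj)
    exact hyN j i hlt hmemj
  rcases lt_or_gt_of_ne hij with h | h
  · exact key i j h hzeq
  · exact key j i h hzeq.symm
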